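/- arXiv:2004.03035 — 5 statements merged into one kernel-verified Lean document; each statement's English description precedes it below -/
import Mathlib

section
/- Let K be a nonempty closed convex subset of the Euclidean plane E = EuclideanSpace ℝ (Fin 2), and let Y ∈ E be a point with Y ∉ K. Then there exists a point Z ∈ K such that for every X ∈ K, dist(X, Z) < dist(X, Y); that is, Z is strictly closer than Y to every point of K. -/
open Metric
open scoped RealInnerProductSpace

/-- Witzgall–Hammer: for a point `Y` outside a nonempty closed convex set `K` in the
Euclidean plane there is a point `Z ∈ K` strictly closer than `Y` to every point of `K`. -/
theorem closer_point_in_closed_convex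
    (K : Set (EuclideanSpace ℝ (Fin 2))) (hne : K.Nonempty)
    (hclosed : IsClosed K) (hconv : Convex ℝ K)
    (Y : EuclideanSpace ℝ (Fin 2)) (hY : Y ∉ K) :
    ∃ Z ∈ K, ∀ X ∈ K, dist X Z < dist X Y := by
  obtain ⟨Z, hZK, hmin⟩ := exists_norm_eq_iInf_of_complete_convex hne
    hclosed.isComplete hconv Y
  have hin := (norm_eq_iInf_iff_real_inner_le_zero hconv hZK).1 hmin
  refine ⟨Z, hZK, fun X hX => ?_⟩
  have hYZ : 0 < ‖Y - Z‖ := by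
    rw [norm_pos_iff, sub_ne_zero]
    rintro rfl; exact hY hZK
  have key : ‖X - Z‖ ^ 2 < ‖X - Y‖ ^ 2 := by
    have h1 := hin X hX
    have hXY : X - Y = (X - Z) - (Y - Z) := by abel
    have h3 := norm_sub_sq_real (X - Z) (Y - Z)
    have h2 : (inner ℝ (X - Z) (Y - Z) : ℝ) ≤ 0 := by
      rw [real_inner_comm]; exact h1
    rw [hXY, h3]
    nlinarith [sq_nonneg ‖Y - Z‖]
  rw [dist_eq_norm, dist_eq_norm]
  exact lt_of_pow_lt_pow_left₀ 2 (norm_nonneg (X - Y)) key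
end

section
/- Fix radii r > 0 and D > 0 and a point a in the Euclidean plane E = EuclideanSpace ℝ (Fin 2). If points z, y ∈ E satisfy dist(a, z) ≤ dist(a, y), then volume(closedBall(a, r) ∩ closedBall(z, D)) ≥ volume(closedBall(a, r) ∩ closedBall(y, D)); that is, the intersection area of the demand disc and the facility's coverage disc is a nonincreasing function of the distance between their centers. -/
open Metric MeasureTheory Submodule

section Aux

variable {F : Type*} [NormedAddCommGroup F] [InnerProductSpace ℝ F] [CompleteSpace F]

local notation "⟪" x ", " y "⟫" => @inner ℝ _ _ x y

/-- Formula for reflection across the hyperplane orthogonal to `v`. -/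
lemma refl_hyperplane_formula (v p : F) :
    (reflection (ℝ ∙ v)ᗮ p : F) = p - (2 * (⟪v, p⟫ / ‖v‖ ^ 2)) • v := by
  rw [reflection_orthogonal_apply, reflection_singleton_apply]
  simp only [RCLike.ofReal_real_eq_id, id_eq]
  module

/-- The inner product identity relating the perpendicular-bisector side of a point
to the difference of squared distances. -/
lemma inner_bisector_eq (z y w : F) :
    ⟪y - z, w - (2⁻¹ : ℝ) • (z + y)⟫ = (‖w - z‖ ^ 2 - ‖w - y‖ ^ 2) / 2 := by
  rw [norm_sub_sq_real, norm_sub_sq_real]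
  simp only [inner_sub_left, inner_sub_right, inner_add_left, inner_add_right,
    real_inner_smul_left, real_inner_smul_right, real_inner_self_eq_norm_sq,
    real_inner_comm w z, real_inner_comm w y, real_inner_comm z y]
  ring

end Aux

/-- The intersection area of the demand disc and the facility's coverage disc is a
nonincreasing function of the distance between the centers. -/
theorem partialCover_antitone_in_dist
    (r D : ℝ) (hr : 0 < r) (hD : 0 < D)
    (a z y : EuclideanSpace ℝ (Fin 2)) (h : dist a z ≤ dist a y) :
    volume (closedBall a r ∩ closedBall z D) ≥
      volume (closedBall a r ∩ closedBall y D) := by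
  classical
  rcases eq_or_ne z y with rfl | hzy
  · exact le_refl _
  set v : EuclideanSpace ℝ (Fin 2) := y - z with hv_def
  have hv : v ≠ 0 := sub_ne_zero.mpr (Ne.symm hzy)
  have hv2 : (0:ℝ) < ‖v‖ ^ 2 := pow_pos (norm_pos_iff.mpr hv) 2
  set c : EuclideanSpace ℝ (Fin 2) := (2⁻¹ : ℝ) • (z + y) with hc_def
  set R :=  reflection (ℝ ∙ v)ᗮ with hR_def
  set σ : EuclideanSpace ℝ (Fin 2) → EuclideanSpace ℝ (Fin 2) := fun x => R (x - c) + c with hσ_def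
  -- basic properties of σ
  have hσ_invol : ∀ x, σ (σ x) = x := by
    intro x
    simp only [hσ_def, add_sub_cancel_right]
    rw [reflection_reflection]
    abel
  have hσ_formula : ∀ x, σ x = x - (2 * (inner ℝ v (x - c) / ‖v‖ ^ 2)) • v := by
    intro x
    simp only [hσ_def]
    rw [refl_hyperplane_formula]
    abel
  have hσ_isom : ∀ u w : EuclideanSpace ℝ (Fin 2), dist (σ u) (σ w) = dist u w := by
    intro u w
    simp only [hσ_def, dist_eq_norm, add_sub_add_right_eq_sub, ← LinearIsometryEquiv.map_sub]
    rw [LinearIsometryEquiv.norm_map]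
    congr 1
    abel
  have hσz : σ z = y := by
    have hz_c : z - c = -((2⁻¹ : ℝ) • v) := by
      simp only [hc_def, hv_def]
      module
    simp only [hσ_def, hz_c, hR_def]
    rw [map_neg, _root_.map_smul, reflection_orthogonalComplement_singleton_eq_neg]
    simp only [hc_def, hv_def]
    module
  -- side conditions via inner products
  have hside : ∀ w : EuclideanSpace ℝ (Fin 2), dist w y ≤ dist w z → 0 ≤ @inner ℝ _ _ v (w - c) := by
    intro w hw
    have h1 : ‖w - y‖ ^ 2 ≤ ‖w - z‖ ^ 2 := by
      rw [dist_eq_norm, dist_eq_norm] at hw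
      exact pow_le_pow_left₀ (norm_nonneg _) hw 2
    have := inner_bisector_eq z y w
    rw [hv_def, hc_def]
    rw [this]
    linarith
  have ht : @inner ℝ _ _ v (a - c) ≤ 0 := by
    have h1 : ‖a - z‖ ^ 2 ≤ ‖a - y‖ ^ 2 := by
      rw [dist_eq_norm, dist_eq_norm] at h
      exact pow_le_pow_left₀ (norm_nonneg _) h 2
    have := inner_bisector_eq z y a
    rw [hv_def, hc_def, this]
    linarith
  -- the key contraction property: reflecting a point on the y-side brings it closer to a
  have hkey : ∀ w : EuclideanSpace ℝ (Fin 2), dist w y ≤ dist w z → dist a (σ w) ≤ dist a w := by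
    intro w hw
    have hs : 0 ≤ @inner ℝ _ _ v (w - c) := hside w hw
    set s : ℝ := @inner ℝ _ _ v (w - c) with hs_def
    set t : ℝ := @inner ℝ _ _ v (a - c) with ht_def
    set k : ℝ := 2 * (s / ‖v‖ ^ 2) with hk_def
    have hk_nonneg : 0 ≤ k := by
      rw [hk_def]; positivity
    have hkn : k * ‖v‖ ^ 2 = 2 * s := by
      rw [hk_def]; field_simp
    have hσw : σ w - a = (w - a) - k • v := by
      rw [hσ_formula w]; abel
    have hinner : @inner ℝ _ _ (w - a) v = s - t := by
      rw [real_inner_comm, hs_def, ht_def]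
      simp only [inner_sub_right]
      ring
    have hsq : ‖σ w - a‖ ^ 2 = ‖w - a‖ ^ 2 - 2 * k * (s - t) + k ^ 2 * ‖v‖ ^ 2 := by
      rw [hσw, norm_sub_sq_real, real_inner_smul_right, hinner, norm_smul]
      rw [mul_pow]
      simp [sq_abs]
      ring
    have hle : ‖σ w - a‖ ^ 2 ≤ ‖w - a‖ ^ 2 := by
      rw [hsq]
      nlinarith [mul_nonneg hk_nonneg (neg_nonneg.mpr ht)]
    rw [dist_eq_norm, dist_eq_norm]
    have h1 : ‖σ w - a‖ ≤ ‖w - a‖ :=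
      (pow_le_pow_iff_left₀ (norm_nonneg _) (norm_nonneg _) (by norm_num)).mp hle
    calc ‖a - σ w‖ = ‖σ w - a‖ := by rw [norm_sub_rev]
      _ ≤ ‖w - a‖ := h1
      _ = ‖a - w‖ := by rw [norm_sub_rev]
  -- measure preservation
  have hσ_mp : MeasurePreserving σ volume volume := by
    have h1 : MeasurePreserving (fun x : EuclideanSpace ℝ (Fin 2) => x - c) volume volume :=
      measurePreserving_sub_right volume c
    have h2 : MeasurePreserving (R : EuclideanSpace ℝ (Fin 2) → EuclideanSpace ℝ (Fin 2)) volume volume :=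
      R.measurePreserving
    have h3 : MeasurePreserving (fun x : EuclideanSpace ℝ (Fin 2) => x + c) volume volume :=
      measurePreserving_add_right volume c
    exact (h3.comp h2).comp h1
  -- set up the sets
  set Sset : Set (EuclideanSpace ℝ (Fin 2)) := closedBall a r ∩ closedBall y D with hSset
  set Tset : Set (EuclideanSpace ℝ (Fin 2)) := closedBall a r ∩ closedBall z D with hTset
  have hS_meas : MeasurableSet Sset :=
    measurableSet_closedBall.inter measurableSet_closedBall
  have hT_meas : MeasurableSet Tset :=
    measurableSet_closedBall.inter measurableSet_closedBall
  set Hm : Set (EuclideanSpace ℝ (Fin 2)) := {x : EuclideanSpace ℝ (Fin 2) | dist x z ≤ dist x y} with hHm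
  have hHm_meas : MeasurableSet Hm :=
    measurableSet_le (continuous_id.dist continuous_const).measurable
      (continuous_id.dist continuous_const).measurable
  set A : Set (EuclideanSpace ℝ (Fin 2)) := Sset ∩ σ ⁻¹' Sset with hA
  set B : Set (EuclideanSpace ℝ (Fin 2)) := Sset \ σ ⁻¹' Sset with hB
  have hA_meas : MeasurableSet A := hS_meas.inter (hS_meas.preimage hσ_mp.measurable)
  have hB_meas : MeasurableSet B := hS_meas.diff (hS_meas.preimage hσ_mp.measurable)
  set Bm : Set (EuclideanSpace ℝ (Fin 2)) := B ∩ Hm with hBm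
  set Bp : Set (EuclideanSpace ℝ (Fin 2)) := B \ Hm with hBp
  have hBm_meas : MeasurableSet Bm := hB_meas.inter hHm_meas
  have hBp_meas : MeasurableSet Bp := hB_meas.diff hHm_meas
  -- the distance dist x z = dist (σ x) y
  have hdist_z : ∀ x : EuclideanSpace ℝ (Fin 2), dist x z = dist (σ x) y := by
    intro x
    rw [← hσz, hσ_isom]
  -- inclusions
  have hA_sub : A ⊆ Tset := by
    rintro x ⟨⟨hx1, _⟩, hx3⟩
    refine ⟨hx1, ?_⟩
    rw [mem_closedBall, hdist_z x]
    exact hx3.2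
  have hBm_sub : Bm ⊆ Tset := by
    rintro x ⟨⟨⟨hx1, hx2⟩, _⟩, hx4⟩
    refine ⟨hx1, ?_⟩
    rw [mem_closedBall]
    exact le_trans hx4 hx2
  have hBp_sub : σ ⁻¹' Bp ⊆ Tset := by
    rintro x hx
    obtain ⟨⟨⟨hσx1, hσx2⟩, _⟩, hσx4⟩ := hx
    have hwy : dist (σ x) y ≤ dist (σ x) z := le_of_not_ge hσx4
    constructor
    · rw [mem_closedBall]
      have h1 := hkey (σ x) hwy
      rw [hσ_invol x] at h1
      have h2 : dist a (σ x) ≤ r := by rw [dist_comm]; exact hσx1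
      rw [dist_comm]
      exact le_trans h1 h2
    · rw [mem_closedBall, hdist_z x]
      exact hσx2
  -- disjointness
  have hBp_preim_S : Disjoint (σ ⁻¹' Bp) Sset := by
    rw [Set.disjoint_left]
    intro x hx hxS
    have : σ x ∈ B := hx.1
    have : σ (σ x) ∉ Sset := this.2
    rw [hσ_invol x] at this
    exact this hxS
  have hd1 : Disjoint A Bm := by
    refine Set.disjoint_left.mpr ?_
    rintro x ⟨_, hx2⟩ ⟨⟨_, hx3⟩, _⟩
    exact hx3 hx2
  have hd2 : Disjoint (A ∪ Bm) (σ ⁻¹' Bp) := by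
    refine Set.disjoint_left.mpr ?_
    rintro x hx hx2
    have hxS : x ∈ Sset := by
      rcases hx with hx | hx
      · exact hx.1
      · exact hx.1.1
    exact Set.disjoint_left.mp hBp_preim_S hx2 hxS
  -- measure computation
  have hmeas_S : volume Sset = volume A + volume B := by
    rw [hA, hB]
    exact (measure_inter_add_diff Sset (hS_meas.preimage hσ_mp.measurable)).symm
  have hmeas_B : volume B = volume Bm + volume Bp := by
    rw [hBm, hBp]
    exact (measure_inter_add_diff B hHm_meas).symm
  have hmeas_Bp : volume (σ ⁻¹' Bp) = volume Bp :=
    hσ_mp.measure_preimage hBp_meas.nullMeasurableSet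
  have hunion_sub : A ∪ Bm ∪ σ ⁻¹' Bp ⊆ Tset :=
    Set.union_subset (Set.union_subset hA_sub hBm_sub) hBp_sub
  calc volume Sset = volume A + (volume Bm + volume Bp) := by rw [hmeas_S, hmeas_B]
    _ = volume A + volume Bm + volume (σ ⁻¹' Bp) := by rw [hmeas_Bp]; ring
    _ = volume (A ∪ Bm) + volume (σ ⁻¹' Bp) := by
        rw [measure_union hd1 hBm_meas]
    _ = volume (A ∪ Bm ∪ σ ⁻¹' Bp) := by
        rw [measure_union hd2 (hBp_meas.preimage hσ_mp.measurable)]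
    _ ≤ volume Tset := measure_mono hunion_sub
end

section
/- Let a : Fin n → E (n ≥ 1) be the centers of the demand points in the Euclidean plane E = EuclideanSpace ℝ (Fin 2), let w : Fin n → ℝ be nonnegative weights, and for each i let φ_i : ℝ → ℝ be a nonincreasing function giving the cover of demand point i by a facility at distance d as φ_i(d). Then for every point y ∈ E there exists a point z in the convex hull convexHull ℝ (Set.range a) of the demand points such that ∑ i, w i * φ_i(dist(a i, z)) ≥ ∑ i, w i * φ_i(dist(a i, y)). -/
open Metric RealInnerProductSpace

/-- Lemma 1 (general form): for a distance-based nonincreasing cover function, for every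
location `y` there is a point `z` of the convex hull of the demand points providing at
least as much total cover. -/
theorem exists_convexHull_point_better_cover
    (n : ℕ) (hn : 1 ≤ n) (a : Fin n → EuclideanSpace ℝ (Fin 2))
    (w : Fin n → ℝ) (hw : ∀ i, 0 ≤ w i)
    (φ : Fin n → ℝ → ℝ) (hφ : ∀ i, Antitone (φ i))
    (y : EuclideanSpace ℝ (Fin 2)) :
    ∃ z ∈ convexHull ℝ (Set.range a),
      ∑ i, w i * φ i (dist (a i) z) ≥ ∑ i, w i * φ i (dist (a i) y) := by
  set K := convexHull ℝ (Set.range a) with hK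
  have hne : K.Nonempty := by
    refine ⟨a ⟨0, hn⟩, subset_convexHull ℝ _ ⟨⟨0, hn⟩, rfl⟩⟩
  have hconv : Convex ℝ K := convex_convexHull ℝ _
  have hcompact : IsCompact K := by
    apply (Set.finite_range a).isCompact_convexHull ℝ
  have hcomplete : IsComplete K := hcompact.isClosed.isComplete
  obtain ⟨v, hvK, hmin⟩ := exists_norm_eq_iInf_of_complete_convex hne hcomplete hconv y
  have hinner : ∀ x ∈ K, ⟪y - v, x - v⟫ ≤ 0 :=
    (norm_eq_iInf_iff_real_inner_le_zero hconv hvK).mp hmin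
  refine ⟨v, hvK, ?_⟩
  apply Finset.sum_le_sum
  intro i _
  have hai : a i ∈ K := subset_convexHull ℝ _ ⟨i, rfl⟩
  have hdist : dist (a i) v ≤ dist (a i) y := by
    have h := hinner (a i) hai
    rw [dist_eq_norm, dist_eq_norm]
    have hsq : ‖a i - v‖ ^ 2 ≤ ‖a i - y‖ ^ 2 := by
      have hrw : a i - y = (a i - v) - (y - v) := by abel
      have hx := norm_sub_sq_real (a i - v) (y - v)
      have h2 : ⟪a i - v, y - v⟫ ≤ 0 := by rwa [real_inner_comm] at h
      rw [hrw]
      nlinarith [sq_nonneg ‖y - v‖]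
    nlinarith [norm_nonneg (a i - v), norm_nonneg (a i - y)]
  exact mul_le_mul_of_nonneg_left (hφ i hdist) (hw i)
end

section
/- Let a : Fin n → E (n ≥ 1) be the centers of the demand points in the Euclidean plane E = EuclideanSpace ℝ (Fin 2), with radii R : Fin n → ℝ, R i > 0, and nonnegative weights w : Fin n → ℝ, and let D > 0 be the cover radius of a single facility. Define the total cover of a facility location y ∈ E as f(y) = ∑ i, w i * (volume(closedBall(a i, R i) ∩ closedBall(y, D))).toReal. Then for every y ∈ E there exists z ∈ convexHull ℝ (Set.range a) with f(z) ≥ f(y); in particular an optimal location of one facility exists in the convex hull of the demand points. -/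
open Metric MeasureTheory
open scoped RealInnerProductSpace

set_option maxHeartbeats 1000000

variable {E : Type*} [NormedAddCommGroup E] [InnerProductSpace ℝ E]
  [FiniteDimensional ℝ E] [MeasurableSpace E] [BorelSpace E]

lemma measure_inter_closedBall_mono (a y z : E) (h : dist z a ≤ dist y a) (R D : ℝ) :
    volume (closedBall a R ∩ closedBall y D) ≤ volume (closedBall a R ∩ closedBall z D) := by
  rcases eq_or_ne y z with rfl | hyz
  · exact le_rfl
  set v : E := y - z with hv_def
  have hv : v ≠ 0 := sub_ne_zero.mpr hyz
  have hvn : ‖v‖ ≠ 0 := norm_ne_zero_iff.mpr hv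
  set m : E := (2⁻¹ : ℝ) • (y + z) with hm_def
  set L : E ≃ₗᵢ[ℝ] E := (Submodule.reflection (ℝ ∙ v)).trans (LinearIsometryEquiv.neg ℝ) with hL_def
  have hLw : ∀ w : E, L w = w - ((2 * ⟪v, w⟫) / ‖v‖ ^ 2) • v := by
    intro w
    have hr := Submodule.reflection_singleton_apply (𝕜 := ℝ) v w
    rw [RCLike.ofReal_real_eq_id] at hr
    simp only [id] at hr
    have hLr : L w = -(Submodule.reflection (ℝ ∙ v) w) := rfl
    have hsc : (2 * ⟪v, w⟫ / ‖v‖ ^ 2) • v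
        = (⟪v, w⟫ / ‖v‖ ^ 2) • v + (⟪v, w⟫ / ‖v‖ ^ 2) • v := by
      rw [← add_smul]; congr 1; ring
    rw [hLr, hr, two_smul, hsc]; abel
  set σ : E → E := (fun x => x + m) ∘ L ∘ (fun x => x + (-m)) with hσ_def
  have hσ : MeasurePreserving σ volume volume :=
    (measurePreserving_add_right volume m).comp
      ((LinearIsometryEquiv.measurePreserving L).comp (measurePreserving_add_right volume (-m)))
  have hσapp : ∀ x : E, σ x = L (x - m) + m := by
    intro x; simp [hσ_def, sub_eq_add_neg]
  have hσdist : ∀ p q : E, dist (σ p) (σ q) = dist p q := by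
    intro p q
    rw [hσapp, hσapp, dist_add_right, L.dist_map, dist_sub_right]
  have hym : y - m = (2⁻¹ : ℝ) • v := by rw [hm_def, hv_def]; module
  have hzm : z - m = -((2⁻¹ : ℝ) • v) := by rw [hm_def, hv_def]; module
  have hinner_half : ⟪v, (2⁻¹ : ℝ) • v⟫ = 2⁻¹ * ‖v‖ ^ 2 := by
    rw [real_inner_smul_right, real_inner_self_eq_norm_sq]
  have hσy : σ y = z := by
    rw [hσapp, hLw, hym, hinner_half]
    have h1 : 2 * (2⁻¹ * ‖v‖ ^ 2) / ‖v‖ ^ 2 = 1 := by field_simp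
    rw [h1, hm_def, hv_def]; module
  have hσz : σ z = y := by
    rw [hσapp, hLw, hzm]
    have h1 : ⟪v, -((2⁻¹:ℝ) • v)⟫ = -(2⁻¹ * ‖v‖^2) := by
      rw [inner_neg_right, hinner_half]
    rw [h1]
    have h2 : 2 * -(2⁻¹ * ‖v‖ ^ 2) / ‖v‖ ^ 2 = -1 := by field_simp
    rw [h2, hm_def, hv_def]; module
  have hav : ⟪v, a - m⟫ ≤ 0 := by
    have h1 : a - z = (a - m) + (2⁻¹:ℝ) • v := by rw [hm_def, hv_def]; module
    have h2 : a - y = (a - m) - (2⁻¹:ℝ) • v := by rw [hm_def, hv_def]; module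
    have h3 : ‖a - z‖ ≤ ‖a - y‖ := by
      rw [← dist_eq_norm, ← dist_eq_norm, dist_comm a z, dist_comm a y]; exact h
    rw [h1, h2] at h3
    have e1 := norm_add_sq_real (a - m) ((2⁻¹:ℝ) • v)
    have e2 := norm_sub_sq_real (a - m) ((2⁻¹:ℝ) • v)
    have h4 : ⟪a - m, (2⁻¹:ℝ) • v⟫ = 2⁻¹ * ⟪v, a - m⟫ := by
      rw [real_inner_smul_right, real_inner_comm]
    nlinarith [norm_nonneg ((a-m) + (2⁻¹:ℝ) • v), norm_nonneg ((a-m) - (2⁻¹:ℝ) • v)]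
  have hincl : (closedBall a R ∩ closedBall y D) \ closedBall z D ⊆
      σ ⁻¹' ((closedBall a R ∩ closedBall z D) \ closedBall y D) := by
    rintro x ⟨⟨hxa, hxy⟩, hxz⟩
    simp only [mem_closedBall] at hxa hxy hxz
    have hxz' : D < dist x z := lt_of_not_ge hxz
    have hxv : 0 ≤ ⟪v, x - m⟫ := by
      have h1 : x - z = (x - m) + (2⁻¹:ℝ) • v := by rw [hm_def, hv_def]; module
      have h2 : x - y = (x - m) - (2⁻¹:ℝ) • v := by rw [hm_def, hv_def]; module
      have h3 : ‖x - y‖ ≤ ‖x - z‖ := by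
        rw [← dist_eq_norm, ← dist_eq_norm]; exact le_of_lt (lt_of_le_of_lt hxy hxz')
      rw [h1, h2] at h3
      have e1 := norm_add_sq_real (x - m) ((2⁻¹:ℝ) • v)
      have e2 := norm_sub_sq_real (x - m) ((2⁻¹:ℝ) • v)
      have h4 : ⟪x - m, (2⁻¹:ℝ) • v⟫ = 2⁻¹ * ⟪v, x - m⟫ := by
        rw [real_inner_smul_right, real_inner_comm]
      nlinarith [norm_nonneg ((x-m) + (2⁻¹:ℝ) • v), norm_nonneg ((x-m) - (2⁻¹:ℝ) • v)]
    simp only [Set.mem_preimage, Set.mem_diff, Set.mem_inter_iff, mem_closedBall]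
    refine ⟨⟨?_, ?_⟩, ?_⟩
    · -- dist (σ x) a ≤ R
      have key : dist (σ x) a ≤ dist x a := by
        have hform : σ x - a = (x - a) - ((2 * ⟪v, x - m⟫) / ‖v‖ ^ 2) • v := by
          rw [hσapp, hLw]; abel
        set t : ℝ := (2 * ⟪v, x - m⟫) / ‖v‖ ^ 2 with ht_def
        have ht : 0 ≤ t := div_nonneg (by linarith) (by positivity)
        have htv : t * ‖v‖ ^ 2 = 2 * ⟪v, x - m⟫ := by
          rw [ht_def]; field_simp
        have e1 := norm_sub_sq_real (x - a) (t • v)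
        have h4 : ⟪x - a, t • v⟫ = t * ⟪v, x - a⟫ := by
          rw [real_inner_smul_right, real_inner_comm]
        have h5 : ⟪v, x - a⟫ = ⟪v, x - m⟫ - ⟪v, a - m⟫ := by
          rw [← inner_sub_right]; congr 1; abel
        have h6 : ‖t • v‖ ^ 2 = t ^ 2 * ‖v‖ ^ 2 := by
          rw [norm_smul, mul_pow, Real.norm_eq_abs, sq_abs]
        rw [dist_eq_norm, dist_eq_norm, hform]
        have hsq : ‖(x - a) - t • v‖ ^ 2 ≤ ‖x - a‖ ^ 2 := by
          rw [e1, h4, h5, h6]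
          nlinarith [mul_nonneg ht (neg_nonneg.mpr hav)]
        nlinarith [norm_nonneg ((x - a) - t • v), norm_nonneg (x - a)]
      exact key.trans hxa
    · calc dist (σ x) z = dist (σ x) (σ y) := by rw [hσy]
        _ = dist x y := hσdist x y
        _ ≤ D := hxy
    · have hd : dist (σ x) y = dist x z := by
        calc dist (σ x) y = dist (σ x) (σ z) := by rw [hσz]
          _ = dist x z := hσdist x z
      rw [hd]; exact hxz
  have hZ : MeasurableSet (closedBall z D) := measurableSet_closedBall
  have hY : MeasurableSet (closedBall y D) := measurableSet_closedBall
  calc volume (closedBall a R ∩ closedBall y D)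
      = volume ((closedBall a R ∩ closedBall y D) ∩ closedBall z D)
        + volume ((closedBall a R ∩ closedBall y D) \ closedBall z D) :=
        (measure_inter_add_diff _ hZ).symm
    _ ≤ volume ((closedBall a R ∩ closedBall z D) ∩ closedBall y D)
        + volume ((closedBall a R ∩ closedBall z D) \ closedBall y D) := by
        refine add_le_add (le_of_eq (by rw [Set.inter_right_comm])) ?_
        calc volume ((closedBall a R ∩ closedBall y D) \ closedBall z D)
            ≤ volume (σ ⁻¹' ((closedBall a R ∩ closedBall z D) \ closedBall y D)) :=
              measure_mono hincl
          _ = volume ((closedBall a R ∩ closedBall z D) \ closedBall y D) :=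
              hσ.measure_preimage
                (((measurableSet_closedBall.inter hZ).diff hY)).nullMeasurableSet
    _ = volume (closedBall a R ∩ closedBall z D) := measure_inter_add_diff _ hY

/-- Lemma 1 specialized to the intersection-area cover model: for every facility location
`y` there is a point `z` of the convex hull of the demand point centers whose total cover
is at least that of `y`. -/
theorem exists_convexHull_point_better_areaCover
    (n : ℕ) (hn : 1 ≤ n) (a : Fin n → EuclideanSpace ℝ (Fin 2))
    (R : Fin n → ℝ) (hR : ∀ i, 0 < R i)
    (w : Fin n → ℝ) (hw : ∀ i, 0 ≤ w i)
    (D : ℝ) (hD : 0 < D)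
    (y : EuclideanSpace ℝ (Fin 2)) :
    ∃ z ∈ convexHull ℝ (Set.range a),
      ∑ i, w i * (volume (closedBall (a i) (R i) ∩ closedBall z D)).toReal ≥
        ∑ i, w i * (volume (closedBall (a i) (R i) ∩ closedBall y D)).toReal := by
  set K : Set (EuclideanSpace ℝ (Fin 2)) := convexHull ℝ (Set.range a) with hK_def
  have hKc : IsCompact K := (Set.finite_range a).isCompact_convexHull ℝ
  have hKne : K.Nonempty := ⟨a ⟨0, hn⟩, subset_convexHull ℝ _ ⟨⟨0, hn⟩, rfl⟩⟩
  obtain ⟨z, hzK, hzmin⟩ := hKc.exists_isMinOn hKne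
    (Continuous.continuousOn (by continuity : Continuous fun x => ‖y - x‖))
  haveI : Nonempty K := ⟨⟨z, hzK⟩⟩
  have hinf : ‖y - z‖ = ⨅ x : K, ‖y - x‖ := by
    refine le_antisymm (le_ciInf fun x => (isMinOn_iff.mp hzmin) x x.2) ?_
    have hbdd : BddBelow (Set.range fun x : K => ‖y - (x : EuclideanSpace ℝ (Fin 2))‖) := by
      refine ⟨0, ?_⟩
      rintro t ⟨x, rfl⟩
      positivity
    exact ciInf_le hbdd ⟨z, hzK⟩
  rw [norm_eq_iInf_iff_real_inner_le_zero (convex_convexHull ℝ _) hzK] at hinf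
  have hdist : ∀ i, dist z (a i) ≤ dist y (a i) := by
    intro i
    have hv := hinf (a i) (subset_convexHull ℝ _ ⟨i, rfl⟩)
    have hid : y - a i = (y - z) + (z - a i) := by abel
    have e1 := norm_add_sq_real (y - z) (z - a i)
    have e2 : ⟪y - z, z - a i⟫ = -⟪y - z, a i - z⟫ := by
      rw [← inner_neg_right]; congr 1; abel
    rw [dist_eq_norm, dist_eq_norm, hid]
    nlinarith [norm_nonneg (y - z), norm_nonneg ((y - z) + (z - a i)), norm_nonneg (z - a i)]
  refine ⟨z, hzK, Finset.sum_le_sum fun i _ => ?_⟩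
  refine mul_le_mul_of_nonneg_left ?_ (hw i)
  refine ENNReal.toReal_mono ?_ (measure_inter_closedBall_mono (a i) y z (hdist i) (R i) D)
  exact ((measure_mono Set.inter_subset_right).trans_lt (measure_closedBall_lt_top)).ne
end

section
/- Let a : Fin n → E (n ≥ 1) be the demand point centers in the Euclidean plane E = EuclideanSpace ℝ (Fin 2) with radii R : Fin n → ℝ, R i > 0, and nonnegative weights w : Fin n → ℝ; let p facilities have cover radii D : Fin p → ℝ, D j > 0. Define the joint cover of a configuration Y : Fin p → E as F(Y) = ∑ i, w i * (volume(closedBall(a i, R i) ∩ ⋃ j, closedBall(Y j, D j))).toReal, and let K = convexHull ℝ (⋃ i, closedBall(a i, R i)) be the convex hull of the demand discs. Then for every configuration Y : Fin p → E there exists a configuration Z : Fin p → E with Z j ∈ K for all j and F(Z) ≥ F(Y); in particular there exists an optimal solution to the multiple facility location problem in which all facilities are located in the convex hull of the demand regions. -/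
open Metric MeasureTheory

theorem my_isCompact_convexHull {E : Type*} [NormedAddCommGroup E] [NormedSpace ℝ E]
    [FiniteDimensional ℝ E] {s : Set E} (hs : IsCompact s) :
    IsCompact (convexHull ℝ s) := by
  classical
  set m := Module.finrank ℝ E + 1 with hm
  set T : Set ((Fin m → ℝ) × (Fin m → E)) :=
    (stdSimplex ℝ (Fin m)) ×ˢ (Set.univ.pi fun _ => s) with hT
  have hTc : IsCompact T := IsCompact.prod (isCompact_stdSimplex ℝ (Fin m)) (isCompact_univ_pi fun _ => hs)
  set f : (Fin m → ℝ) × (Fin m → E) → E := fun q => ∑ i, q.1 i • q.2 i with hf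
  have hfc : Continuous f := by
    apply continuous_finset_sum
    intro i _
    exact ((continuous_apply i).comp continuous_fst).smul
      ((continuous_apply i).comp continuous_snd)
  have himg : convexHull ℝ s = f '' T := by
    apply Set.Subset.antisymm
    · intro x hx
      obtain ⟨ι, hι, z, w, hzs, hai, hwpos, hwsum, hx⟩ :=
        eq_pos_convex_span_of_mem_convexHull hx
      have hcard : Fintype.card ι ≤ m := by
        calc Fintype.card ι ≤ Module.finrank ℝ (vectorSpan ℝ (Set.range z)) + 1 :=
              hai.card_le_finrank_succ
          _ ≤ m := by
              have := Submodule.finrank_le (vectorSpan ℝ (Set.range z))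
              omega
      have hcard' : Fintype.card ι ≤ Fintype.card (Fin m) := by simpa using hcard
      obtain ⟨e⟩ : Nonempty (ι ↪ Fin m) := Function.Embedding.nonempty_of_card_le hcard'
      have hιne : Nonempty ι := by
        by_contra h
        rw [not_nonempty_iff] at h
        simp [Finset.univ_eq_empty] at hwsum
      obtain ⟨i₀⟩ := hιne
      set w' : Fin m → ℝ := fun j => if h : ∃ i, e i = j then w h.choose else 0 with hw'
      set z' : Fin m → E := fun j => if h : ∃ i, e i = j then z h.choose else z i₀ with hz'
      have keyw : ∀ i, w' (e i) = w i := by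
        intro i
        have h : ∃ i', e i' = e i := ⟨i, rfl⟩
        have hch : h.choose = i := e.injective h.choose_spec
        simp only [hw', dif_pos h, hch]
      have keyz : ∀ i, z' (e i) = z i := by
        intro i
        have h : ∃ i', e i' = e i := ⟨i, rfl⟩
        have hch : h.choose = i := e.injective h.choose_spec
        simp only [hz', dif_pos h, hch]
      have hvan : ∀ j : Fin m, j ∉ Finset.univ.map e → w' j = 0 := by
        intro j hj
        apply dif_neg
        rintro ⟨i, hi⟩
        exact hj (Finset.mem_map.mpr ⟨i, Finset.mem_univ i, hi⟩)
      have hsumw : ∑ j, w' j = 1 := by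
        rw [← Finset.sum_subset (Finset.subset_univ (Finset.univ.map e))
          (fun j _ hj => hvan j hj), Finset.sum_map]
        simp only [Function.Embedding.coeFn_mk, keyw]
        exact hwsum
      have hsumz : ∑ j, w' j • z' j = x := by
        rw [← Finset.sum_subset (Finset.subset_univ (Finset.univ.map e))
          (fun j _ hj => by rw [hvan j hj, zero_smul]), Finset.sum_map]
        simp only [Function.Embedding.coeFn_mk, keyw, keyz]
        exact hx
      refine ⟨⟨w', z'⟩, ⟨⟨?_, hsumw⟩, ?_⟩, hsumz⟩
      · intro j
        by_cases h : ∃ i, e i = j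
        · simp only [hw', dif_pos h]; exact (hwpos _).le
        · simp only [hw', dif_neg h]; exact le_rfl
      · intro j _
        by_cases h : ∃ i, e i = j
        · simp only [hz', dif_pos h]; exact hzs ⟨_, rfl⟩
        · simp only [hz', dif_neg h]; exact hzs ⟨i₀, rfl⟩
    · rintro x ⟨⟨w, z⟩, ⟨hw, hz⟩, rfl⟩
      apply (convex_convexHull ℝ s).sum_mem
      · intro i _; exact hw.1 i
      · exact hw.2
      · intro i _
        exact subset_convexHull ℝ s (hz i (Set.mem_univ i))
  rw [himg]
  exact hTc.image hfc

/-- Projection of a point onto a nonempty closed convex set does not increase distances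
to points of the set. -/
lemma exists_proj_dist_le {E : Type*} [NormedAddCommGroup E] [InnerProductSpace ℝ E]
    [CompleteSpace E] {K : Set E} (hK : Convex ℝ K) (hKc : IsClosed K)
    (hne : K.Nonempty) (y : E) :
    ∃ z ∈ K, ∀ x ∈ K, dist x z ≤ dist x y := by
  have : Nonempty K := hne.to_subtype
  obtain ⟨z, hzK, hz⟩ := exists_norm_eq_iInf_of_complete_convex hne
    (hKc.isComplete) hK y
  refine ⟨z, hzK, fun x hx => ?_⟩
  have hinner : ∀ x ∈ K, inner ℝ (y - z) (x - z) ≤ (0 : ℝ) :=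
    (norm_eq_iInf_iff_real_inner_le_zero hK hzK).mp hz
  have h := hinner x hx
  have hsq : ‖x - y‖ ^ 2 = ‖x - z‖ ^ 2 - 2 * inner ℝ (x - z) (y - z) + ‖y - z‖ ^ 2 := by
    have := @norm_sub_sq_real E _ _ (x - z) (y - z)
    have heq : (x - z) - (y - z) = x - y := by abel
    rw [heq] at this
    linarith
  have h' : inner ℝ (x - z) (y - z) ≤ (0 : ℝ) := by
    rwa [real_inner_comm] at h
  have hle : ‖x - z‖ ^ 2 ≤ ‖x - y‖ ^ 2 := by nlinarith [sq_nonneg ‖y - z‖]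
  rw [dist_eq_norm, dist_eq_norm]
  nlinarith [norm_nonneg (x - z), norm_nonneg (x - y), hle]

/-- Theorem 2: for every configuration of `p` facilities there is a configuration with
all facilities in the convex hull of the demand discs whose joint cover is at least as
large; in particular an optimal solution exists with all facilities in that convex hull. -/
theorem exists_config_in_convexHull_better_jointCover
    (n : ℕ) (hn : 1 ≤ n) (a : Fin n → EuclideanSpace ℝ (Fin 2))
    (R : Fin n → ℝ) (hR : ∀ i, 0 < R i)
    (w : Fin n → ℝ) (hw : ∀ i, 0 ≤ w i)
    (p : ℕ) (D : Fin p → ℝ) (hD : ∀ j, 0 < D j)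
    (Y : Fin p → EuclideanSpace ℝ (Fin 2)) :
    ∃ Z : Fin p → EuclideanSpace ℝ (Fin 2),
      (∀ j, Z j ∈ convexHull ℝ (⋃ i, closedBall (a i) (R i))) ∧
      ∑ i, w i * (volume (closedBall (a i) (R i) ∩ ⋃ j, closedBall (Z j) (D j))).toReal ≥
        ∑ i, w i * (volume (closedBall (a i) (R i) ∩ ⋃ j, closedBall (Y j) (D j))).toReal := by
  set K := convexHull ℝ (⋃ i, closedBall (a i) (R i)) with hKdef
  have hKconv : Convex ℝ K := convex_convexHull ℝ _
  have hKcomp : IsCompact K := by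
    exact my_isCompact_convexHull (isCompact_iUnion (fun i => isCompact_closedBall _ _))
  have hKcl : IsClosed K := hKcomp.isClosed
  have hKne : K.Nonempty := by
    refine ⟨a ⟨0, hn⟩, subset_convexHull ℝ _ ?_⟩
    exact Set.mem_iUnion.mpr ⟨⟨0, hn⟩, mem_closedBall_self (hR _).le⟩
  choose Z hZK hZdist using fun j => exists_proj_dist_le hKconv hKcl hKne (Y j)
  refine ⟨Z, hZK, ?_⟩
  apply Finset.sum_le_sum
  intro i _
  apply mul_le_mul_of_nonneg_left _ (hw i)
  have hsub : closedBall (a i) (R i) ∩ ⋃ j, closedBall (Y j) (D j) ⊆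
      closedBall (a i) (R i) ∩ ⋃ j, closedBall (Z j) (D j) := by
    rintro x ⟨hx1, hx2⟩
    refine ⟨hx1, ?_⟩
    obtain ⟨j, hj⟩ := Set.mem_iUnion.mp hx2
    refine Set.mem_iUnion.mpr ⟨j, ?_⟩
    have hxK : x ∈ K := subset_convexHull ℝ _ (Set.mem_iUnion.mpr ⟨i, hx1⟩)
    have := hZdist j x hxK
    simp only [mem_closedBall] at hj ⊢
    exact le_trans this hj
  have hfin : volume (closedBall (a i) (R i) ∩ ⋃ j, closedBall (Z j) (D j)) ≠ ⊤ := by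
    apply ne_of_lt
    calc volume (closedBall (a i) (R i) ∩ ⋃ j, closedBall (Z j) (D j))
        ≤ volume (closedBall (a i) (R i)) := measure_mono Set.inter_subset_left
      _ < ⊤ := measure_closedBall_lt_top
  exact (ENNReal.toReal_le_toReal (ne_top_of_le_ne_top hfin (measure_mono hsub)) hfin).mpr
    (measure_mono hsub)
end
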